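/- Fix an integer d ≥ 4 and define v_d(m,t) by the recursion v_d(0,t) = 0, v_d(1,t) = exp(−dt/(d−1)), and for m ≥ 2, v_d(m,t) = e^{−mt} + ∫_0^t (m e^{−mu}/(d−1))·[m·v_d(m−2, t−u) + m(d−2)·v_d(m−1, t−u)] du. Then v_d(m,t) is strictly increasing in m: for every integer m ≥ 1, v_d(m−1,t) ≤ v_d(m,t) for all t ≥ 0, with strict inequality v_d(m−1,t) < v_d(m,t) for all t > 0. -/

import Mathlib

open MeasureTheory intervalIntegral in
/-- Tail probability `v_d(m,t)` of the coupling time of the optimal co-adapted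
coupling, defined recursively in `m`. -/
noncomputable def v (d : ℕ) : ℕ → ℝ → ℝ
  | 0, _ => 0
  | 1, t => Real.exp (-((d : ℝ) * t) / ((d : ℝ) - 1))
  | (m + 2), t =>
      Real.exp (-((m : ℝ) + 2) * t) +
        ∫ u in (0 : ℝ)..t,
          (((m : ℝ) + 2) * Real.exp (-((m : ℝ) + 2) * u) / ((d : ℝ) - 1)) *
            (((m : ℝ) + 2) * v d m (t - u) +
              ((m : ℝ) + 2) * ((d : ℝ) - 2) * v d (m + 1) (t - u))

/-! ### Auxiliary lemmas -/

lemma v_rw (d m : ℕ) (t : ℝ) :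
    v d (m+2) t = Real.exp (-((m:ℝ)+2)*t) + Real.exp (-((m:ℝ)+2)*t) *
      ((((m:ℝ)+2)/((d:ℝ)-1)) *
        ∫ s in (0:ℝ)..t, Real.exp (((m:ℝ)+2)*s) *
          (((m:ℝ)+2) * v d m s + ((m:ℝ)+2)*((d:ℝ)-2) * v d (m+1) s)) := by
  have h1 := intervalIntegral.integral_comp_sub_left (a := 0) (b := t)
    (fun s => (((m:ℝ)+2) * Real.exp (-((m:ℝ)+2)*(t-s)) / ((d:ℝ)-1)) *
      (((m:ℝ)+2) * v d m s + ((m:ℝ)+2)*((d:ℝ)-2) * v d (m+1) s)) t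
  simp only [sub_self, sub_zero, sub_sub_cancel] at h1
  have h2 : ∀ s : ℝ, (((m:ℝ)+2) * Real.exp (-((m:ℝ)+2)*(t-s)) / ((d:ℝ)-1)) *
      (((m:ℝ)+2) * v d m s + ((m:ℝ)+2)*((d:ℝ)-2) * v d (m+1) s)
      = (Real.exp (-((m:ℝ)+2)*t) * (((m:ℝ)+2)/((d:ℝ)-1))) *
        (Real.exp (((m:ℝ)+2)*s) * (((m:ℝ)+2) * v d m s + ((m:ℝ)+2)*((d:ℝ)-2) * v d (m+1) s)) := by
    intro s
    rw [show -((m:ℝ)+2)*(t-s) = -((m:ℝ)+2)*t + ((m:ℝ)+2)*s by ring, Real.exp_add]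
    ring
  simp only [v]
  rw [h1]
  simp only [h2]
  rw [intervalIntegral.integral_const_mul]
  ring

lemma hasDerivAt_primitive {f : ℝ → ℝ} (hf : Continuous f) (t : ℝ) :
    HasDerivAt (fun x => ∫ s in (0:ℝ)..x, f s) (f t) t :=
  intervalIntegral.integral_hasDerivAt_right (hf.intervalIntegrable 0 t)
    (hf.stronglyMeasurable.stronglyMeasurableAtFilter) hf.continuousAt

lemma v_cont (d : ℕ) : ∀ m, Continuous (v d m) := by
  intro m
  induction m using Nat.strong_induction_on with
  | _ m ih =>
    match m, ih with
    | 0, _ =>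
      have e : v d 0 = fun _ => (0:ℝ) := funext fun t => by simp [v]
      rw [e]; exact continuous_const
    | 1, _ =>
      have e : v d 1 = fun t => Real.exp (-((d : ℝ) * t) / ((d : ℝ) - 1)) :=
        funext fun t => by simp [v]
      rw [e]
      exact Real.continuous_exp.comp (by fun_prop)
    | (m+2), ih =>
      have hm := ih m (by omega)
      have hm1 := ih (m+1) (by omega)
      have hW : Continuous (fun s => Real.exp (((m:ℝ)+2)*s) *
          (((m:ℝ)+2) * v d m s + ((m:ℝ)+2)*((d:ℝ)-2) * v d (m+1) s)) := by
        apply Continuous.mul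
        · exact Real.continuous_exp.comp (by fun_prop)
        · exact (continuous_const.mul hm).add (continuous_const.mul hm1)
      have hJ : Continuous (fun t => ∫ s in (0:ℝ)..t, Real.exp (((m:ℝ)+2)*s) *
          (((m:ℝ)+2) * v d m s + ((m:ℝ)+2)*((d:ℝ)-2) * v d (m+1) s)) :=
        continuous_iff_continuousAt.2 fun t => (hasDerivAt_primitive hW t).continuousAt
      have e : v d (m+2) = fun t => Real.exp (-((m:ℝ)+2)*t) + Real.exp (-((m:ℝ)+2)*t) *
          ((((m:ℝ)+2)/((d:ℝ)-1)) *
            ∫ s in (0:ℝ)..t, Real.exp (((m:ℝ)+2)*s) *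
              (((m:ℝ)+2) * v d m s + ((m:ℝ)+2)*((d:ℝ)-2) * v d (m+1) s)) :=
        funext (v_rw d m)
      rw [e]
      have hexp : Continuous (fun t : ℝ => Real.exp (-((m:ℝ)+2)*t)) :=
        Real.continuous_exp.comp (by fun_prop)
      exact hexp.add (hexp.mul (continuous_const.mul hJ))

lemma v_nonneg (d : ℕ) (hd : 4 ≤ d) : ∀ m, ∀ t : ℝ, 0 ≤ t → 0 ≤ v d m t := by
  have hd4 : (4:ℝ) ≤ (d:ℝ) := by exact_mod_cast hd
  intro m
  induction m using Nat.strong_induction_on with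
  | _ m ih =>
    match m, ih with
    | 0, _ => intro t _; simp [v]
    | 1, _ => intro t _; simp only [v]; exact (Real.exp_pos _).le
    | (m+2), ih =>
      intro t ht
      simp only [v]
      have hint : 0 ≤ ∫ u in (0:ℝ)..t,
          (((m : ℝ) + 2) * Real.exp (-((m : ℝ) + 2) * u) / ((d : ℝ) - 1)) *
            (((m : ℝ) + 2) * v d m (t - u) +
              ((m : ℝ) + 2) * ((d : ℝ) - 2) * v d (m + 1) (t - u)) := by
        apply intervalIntegral.integral_nonneg ht
        intro u hu
        have h1 : 0 ≤ t - u := by have := hu.2; linarith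
        have h2 : 0 ≤ v d m (t-u) := ih m (by omega) _ h1
        have h3 : 0 ≤ v d (m+1) (t-u) := ih (m+1) (by omega) _ h1
        have hD : (0:ℝ) < (d:ℝ)-1 := by linarith
        have hc : (0:ℝ) ≤ (m:ℝ)+2 := by positivity
        apply mul_nonneg
        · exact div_nonneg (mul_nonneg hc (Real.exp_pos _).le) hD.le
        · exact add_nonneg (mul_nonneg hc h2)
            (mul_nonneg (mul_nonneg hc (by linarith)) h3)
      have := (Real.exp_pos (-((m:ℝ)+2)*t)).le
      linarith

lemma v_pos (d : ℕ) (hd : 4 ≤ d) (m : ℕ) (t : ℝ) (ht : 0 ≤ t) : 0 < v d (m+1) t := by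
  have hd4 : (4:ℝ) ≤ (d:ℝ) := by exact_mod_cast hd
  match m with
  | 0 => simp only [v]; exact Real.exp_pos _
  | (m+1) =>
    simp only [v]
    have hint : 0 ≤ ∫ u in (0:ℝ)..t,
        (((m : ℝ) + 2) * Real.exp (-((m : ℝ) + 2) * u) / ((d : ℝ) - 1)) *
          (((m : ℝ) + 2) * v d m (t - u) +
            ((m : ℝ) + 2) * ((d : ℝ) - 2) * v d (m + 1) (t - u)) := by
      apply intervalIntegral.integral_nonneg ht
      intro u hu
      have h1 : 0 ≤ t - u := by have := hu.2; linarith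
      have h2 : 0 ≤ v d m (t-u) := v_nonneg d hd m _ h1
      have h3 : 0 ≤ v d (m+1) (t-u) := v_nonneg d hd (m+1) _ h1
      have hD : (0:ℝ) < (d:ℝ)-1 := by linarith
      have hc : (0:ℝ) ≤ (m:ℝ)+2 := by positivity
      apply mul_nonneg
      · exact div_nonneg (mul_nonneg hc (Real.exp_pos _).le) hD.le
      · exact add_nonneg (mul_nonneg hc h2)
          (mul_nonneg (mul_nonneg hc (by linarith)) h3)
    have := Real.exp_pos (-((m:ℝ)+2)*t)
    linarith

lemma v_zero_eq_one (d : ℕ) (m : ℕ) : v d (m+1) 0 = 1 := by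
  match m with
  | 0 => simp [v]
  | (m+1) => simp [v]

lemma v1_hasDerivAt (d : ℕ) (t : ℝ) :
    HasDerivAt (v d 1) (-((d:ℝ)/((d:ℝ)-1)) * v d 1 t) t := by
  have e : v d 1 = fun x => Real.exp (-((d : ℝ) * x) / ((d : ℝ) - 1)) :=
    funext fun x => by simp [v]
  rw [e]
  have h : HasDerivAt (fun x : ℝ => -((d:ℝ)*x)/((d:ℝ)-1)) (-((d:ℝ))/((d:ℝ)-1)) t := by
    have e2 : (fun x : ℝ => -((d:ℝ)*x)/((d:ℝ)-1)) = fun x => (-((d:ℝ))/((d:ℝ)-1)) * x :=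
      funext fun x => by ring
    rw [e2]
    simpa using (hasDerivAt_id t).const_mul (-((d:ℝ))/((d:ℝ)-1))
  convert h.exp using 1
  ring

lemma v_hasDerivAt (d m : ℕ) (hd : 4 ≤ d) (t : ℝ) :
    HasDerivAt (v d (m+2))
      (-(((m:ℝ)+2)) * v d (m+2) t + (((m:ℝ)+2)/((d:ℝ)-1)) *
        (((m:ℝ)+2) * v d m t + ((m:ℝ)+2)*((d:ℝ)-2) * v d (m+1) t)) t := by
  set c : ℝ := (m:ℝ)+2 with hc
  have hW : Continuous (fun s => Real.exp (c*s) *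
      (c * v d m s + c*((d:ℝ)-2) * v d (m+1) s)) := by
    apply Continuous.mul
    · exact Real.continuous_exp.comp (by fun_prop)
    · exact (continuous_const.mul (v_cont d m)).add (continuous_const.mul (v_cont d (m+1)))
  have hE : HasDerivAt (fun y : ℝ => Real.exp (-c*y)) (-c * Real.exp (-c*t)) t := by
    have := ((hasDerivAt_id t).const_mul (-c)).exp
    simpa [mul_comm] using this
  have hJ : HasDerivAt (fun x => ∫ s in (0:ℝ)..x, Real.exp (c*s) *
        (c * v d m s + c*((d:ℝ)-2) * v d (m+1) s))
      (Real.exp (c*t) * (c * v d m t + c*((d:ℝ)-2) * v d (m+1) t)) t :=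
    hasDerivAt_primitive hW t
  have h := hE.add (hE.mul (hJ.const_mul (c/((d:ℝ)-1))))
  have e : v d (m+2) = fun x => Real.exp (-c*x) + Real.exp (-c*x) *
      ((c/((d:ℝ)-1)) * ∫ s in (0:ℝ)..x, Real.exp (c*s) *
        (c * v d m s + c*((d:ℝ)-2) * v d (m+1) s)) := funext (v_rw d m)
  rw [e]
  refine h.congr_deriv ?_
  have hexp : Real.exp (-c*t) * Real.exp (c*t) = 1 := by
    rw [← Real.exp_add]; simp
  have hD : ((d:ℝ)-1) ≠ 0 := by
    have : (4:ℝ) ≤ (d:ℝ) := by exact_mod_cast hd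
    intro h; linarith [this, sub_eq_zero.1 h]
  beta_reduce
  linear_combination ((c/((d:ℝ)-1) * (c * v d m t + c*((d:ℝ)-2) * v d (m+1) t))) * hexp

lemma comparison (c : ℝ) (f g f' g' : ℝ → ℝ)
    (hf : ∀ t, HasDerivAt f (f' t) t) (hg : ∀ t, HasDerivAt g (g' t) t)
    (h0 : g 0 = f 0)
    (hlt : ∀ t, 0 ≤ t → g' t + c * g t < f' t + c * f t) :
    (∀ t, 0 ≤ t → g t ≤ f t) ∧ (∀ t, 0 < t → g t < f t) := by
  set h : ℝ → ℝ := fun x => Real.exp (c*x) * (f x - g x) with hh_def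
  have hh : ∀ t, HasDerivAt h
      (Real.exp (c*t) * ((f' t + c * f t) - (g' t + c * g t))) t := by
    intro t
    have h1 : HasDerivAt (fun x : ℝ => Real.exp (c*x)) (Real.exp (c*t) * c) t := by
      simpa using ((hasDerivAt_id t).const_mul c).exp
    have h2 := (hf t).sub (hg t)
    have := h1.mul h2
    exact this.congr_deriv (by simp only [Pi.sub_apply]; ring)
  have hcont : Continuous h := continuous_iff_continuousAt.2 fun t => (hh t).continuousAt
  have hmono : StrictMonoOn h (Set.Ici (0:ℝ)) := by
    apply strictMonoOn_of_deriv_pos (convex_Ici 0) hcont.continuousOn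
    intro x hx
    rw [interior_Ici] at hx
    rw [(hh x).deriv]
    have := hlt x (le_of_lt hx)
    have he := Real.exp_pos (c*x)
    nlinarith
  have h0' : h 0 = 0 := by simp [hh_def, h0]
  have strict : ∀ t, 0 < t → g t < f t := by
    intro t ht
    have h1 := hmono (Set.self_mem_Ici) (Set.mem_Ici.2 ht.le) ht
    rw [h0'] at h1
    have h2 : 0 < Real.exp (c*t) * (f t - g t) := by simpa [hh_def] using h1
    have he := Real.exp_pos (c*t)
    nlinarith
  refine ⟨fun t ht => ?_, strict⟩
  rcases eq_or_lt_of_le ht with h | h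
  · rw [← h, h0]
  · exact (strict t h).le

lemma v_mono (d : ℕ) (hd : 4 ≤ d) : ∀ k : ℕ,
    (∀ t : ℝ, 0 ≤ t → v d k t ≤ v d (k+1) t) ∧
    (∀ t : ℝ, 0 < t → v d k t < v d (k+1) t) := by
  have hd4 : (4:ℝ) ≤ (d:ℝ) := by exact_mod_cast hd
  have hD : (0:ℝ) < (d:ℝ)-1 := by linarith
  have hDne : ((d:ℝ)-1) ≠ 0 := ne_of_gt hD
  have hE : (0:ℝ) < ((d:ℝ)-1)⁻¹ := inv_pos.2 hD
  intro k
  induction k using Nat.strong_induction_on with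
  | _ k ih =>
    match k, ih with
    | 0, _ =>
      constructor <;> intro t ht
      · have e0 : v d 0 t = 0 := by simp [v]
        rw [e0]; exact v_nonneg d hd 1 t ht
      · have e0 : v d 0 t = 0 := by simp [v]
        rw [e0]; exact v_pos d hd 0 t ht.le
    | 1, _ =>
      have h0 : v d 1 0 = v d (0+2) 0 := by
        rw [v_zero_eq_one d 0, v_zero_eq_one d 1]
      refine comparison 2 (v d (0+2)) (v d 1) _ _
        (fun t => v_hasDerivAt d 0 hd t) (fun t => v1_hasDerivAt d t) h0 ?_
      intro t ht
      have hp : 0 < v d 1 t := v_pos d hd 0 t ht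
      have hv0 : v d 0 t = 0 := by simp [v]
      rw [hv0]
      push_cast
      have hA : 0 < ((d:ℝ)-1)⁻¹ * v d 1 t := mul_pos hE hp
      have hB : 0 ≤ ((d:ℝ)-4) * (((d:ℝ)-1)⁻¹ * v d 1 t) := mul_nonneg (by linarith) hA.le
      have hC : ((d:ℝ)-1) * (((d:ℝ)-1)⁻¹ * v d 1 t) = v d 1 t := by
        rw [← mul_assoc, mul_inv_cancel₀ hDne, one_mul]
      simp only [div_eq_mul_inv]
      nlinarith [hA, hB, hC]
    | (j+2), ih =>
      have h0 : v d (j+2) 0 = v d (j+3) 0 := by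
        rw [v_zero_eq_one d (j+1), v_zero_eq_one d (j+2)]
      refine comparison ((j:ℝ)+3) (v d (j+3)) (v d (j+2)) _ _
        (fun t => v_hasDerivAt d (j+1) hd t) (fun t => v_hasDerivAt d j hd t) h0 ?_
      intro t ht
      have h01 := (ih j (by omega)).1 t ht
      have h12 := (ih (j+1) (by omega)).1 t ht
      have h0n : 0 ≤ v d j t := v_nonneg d hd j t ht
      have h1n : 0 ≤ v d (j+1) t := v_nonneg d hd (j+1) t ht
      have hp2 : 0 < v d (j+2) t := v_pos d hd (j+1) t ht
      have key1 : 0 ≤ ((j:ℝ)+3)^2 * (((d:ℝ)-1)⁻¹ * v d (j+1) t)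
          - ((j:ℝ)+2)^2 * (((d:ℝ)-1)⁻¹ * v d j t) := by
        have a1 : 0 ≤ ((j:ℝ)+2)^2 * (((d:ℝ)-1)⁻¹ * (v d (j+1) t - v d j t)) :=
          mul_nonneg (by positivity) (mul_nonneg hE.le (by linarith))
        have a2 : 0 ≤ (2*(j:ℝ)+5) * (((d:ℝ)-1)⁻¹ * v d (j+1) t) :=
          mul_nonneg (by positivity) (mul_nonneg hE.le h1n)
        nlinarith [a1, a2]
      have key2 : 0 ≤ ((j:ℝ)+2)^2 * ((d:ℝ)-2) * (((d:ℝ)-1)⁻¹ * (v d (j+2) t - v d (j+1) t)) :=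
        mul_nonneg (mul_nonneg (by positivity) (by linarith)) (mul_nonneg hE.le (by linarith))
      have key3 : 0 < ((2*(j:ℝ)+5)*((d:ℝ)-2) - ((d:ℝ)-1)) * (((d:ℝ)-1)⁻¹ * v d (j+2) t) := by
        apply mul_pos
        · have hj0 : (0:ℝ) ≤ (j:ℝ) := Nat.cast_nonneg j
          nlinarith [mul_nonneg hj0 (by linarith : (0:ℝ) ≤ (d:ℝ)-2)]
        · exact mul_pos hE hp2
      have hI : ((d:ℝ)-1) * (((d:ℝ)-1)⁻¹ * v d (j+2) t) = v d (j+2) t := by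
        rw [← mul_assoc, mul_inv_cancel₀ hDne, one_mul]
      push_cast
      simp only [div_eq_mul_inv]
      nlinarith [key1, key2, key3, hI]

theorem v_strictly_increasing_in_m (d : ℕ) (hd : 4 ≤ d) :
    ∀ m : ℕ, 1 ≤ m →
      (∀ t : ℝ, 0 ≤ t → v d (m - 1) t ≤ v d m t) ∧
      (∀ t : ℝ, 0 < t → v d (m - 1) t < v d m t) := by
  intro m hm
  obtain ⟨k, rfl⟩ : ∃ k, m = k + 1 := ⟨m - 1, by omega⟩
  simpa using v_mono d hd k
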